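/- For every instance (R_1,…,R_n) of slotted OSCM-2, the minimum crossing number over all assignments equals the sum over all unordered pairs of distinct request indices of the pairwise minimum crossing number: opt = Σ_{1 ≤ i < j ≤ n} mincross(R_i,R_j). In particular, an assignment is optimal if and only if every pair of requests is placed in a relative order attaining its pairwise minimum number of crossings. -/

import Mathlib

/- Slotted OSCM-2 model.  Slots and vertices are indexed by `Fin n` with the natural
linear order.  A request is an unordered pair of two distinct vertices, stored with
`fst < snd`. -/

structure Request (n : ℕ) where
  fst : Fin n
  snd : Fin n
  lt : fst < snd

/-- Two edges `(s,u)` and `(s',u')` cross iff `(s < s' ∧ u' < u) ∨ (s' < s ∧ u < u')`. -/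
def edgesCross {n : ℕ} (s s' u u' : Fin n) : Prop :=
  (s < s' ∧ u' < u) ∨ (s' < s ∧ u < u')

instance {n : ℕ} (s s' u u' : Fin n) : Decidable (edgesCross s s' u u') := by
  unfold edgesCross; infer_instance

/-- Number of crossing pairs of edges between request `R` placed at slot `s` and
request `R'` placed at slot `s'`. -/
def pairCross {n : ℕ} (R R' : Request n) (s s' : Fin n) : ℕ :=
  (if edgesCross s s' R.fst R'.fst then 1 else 0) +
  (if edgesCross s s' R.fst R'.snd then 1 else 0) +
  (if edgesCross s s' R.snd R'.fst then 1 else 0) +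
  (if edgesCross s s' R.snd R'.snd then 1 else 0)

/-- Crossing number of an assignment `σ` for the instance `R`. -/
def cr {n : ℕ} (R : Fin n → Request n) (σ : Fin n → Fin n) : ℕ :=
  ∑ p ∈ Finset.univ.filter (fun p : Fin n × Fin n => p.1 < p.2),
    pairCross (R p.1) (R p.2) (σ p.1) (σ p.2)

/-- Minimum crossing number over all assignments (bijections). -/
noncomputable def opt {n : ℕ} (R : Fin n → Request n) : ℕ :=
  sInf {c : ℕ | ∃ σ : Equiv.Perm (Fin n), cr R (⇑σ) = c}

/-- `crossLower R R'`: number of crossings between the edges of `R` and `R'` when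
`R` gets the smaller of the two slots. -/
def crossLower {n : ℕ} (R R' : Request n) : ℕ :=
  (if R'.fst < R.fst then 1 else 0) + (if R'.snd < R.fst then 1 else 0) +
  (if R'.fst < R.snd then 1 else 0) + (if R'.snd < R.snd then 1 else 0)

/-- Pairwise minimum number of crossings between two requests. -/
def mincross {n : ℕ} (R R' : Request n) : ℕ :=
  min (crossLower R R') (crossLower R' R)

/-- The instance is 2-regular: every vertex occurs exactly twice among the requests,
counted with multiplicity. -/
def TwoRegular {n : ℕ} (R : Fin n → Request n) : Prop :=
  ∀ v : Fin n,
    (∑ i : Fin n, ((if (R i).fst = v then 1 else 0) + (if (R i).snd = v then 1 else 0))) = 2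

lemma pairCross_of_lt {n : ℕ} (R R' : Request n) {s s' : Fin n} (h : s < s') :
    pairCross R R' s s' = crossLower R R' := by
  simp only [pairCross, crossLower, edgesCross, h, asymm h, true_and, false_and,
    or_false, false_or]

lemma pairCross_of_gt {n : ℕ} (R R' : Request n) {s s' : Fin n} (h : s' < s) :
    pairCross R R' s s' = crossLower R' R := by
  simp only [pairCross, crossLower, edgesCross, h, asymm h, true_and, false_and,
    or_false, false_or]
  split_ifs <;> omega

lemma crossLower_le {n : ℕ} (A B : Request n)
    (h : (A.fst : ℕ) + A.snd ≤ (B.fst : ℕ) + B.snd) :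
    crossLower A B ≤ crossLower B A := by
  have ha := A.lt; have hb := B.lt
  simp only [crossLower, Fin.lt_def] at *
  split_ifs <;> omega

lemma mincross_le_pairCross {n : ℕ} (R R' : Request n) {s s' : Fin n} (h : s ≠ s') :
    mincross R R' ≤ pairCross R R' s s' := by
  rcases lt_or_gt_of_ne h with h | h
  · rw [pairCross_of_lt R R' h]; exact min_le_left _ _
  · rw [pairCross_of_gt R R' h]; exact min_le_right _ _

/-- The minimum crossing number equals the sum over all unordered pairs of requests
of the pairwise minimum crossing number; in particular an assignment is optimal iff
every pair of requests attains its pairwise minimum number of crossings. -/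
theorem opt_eq_sum_mincross {n : ℕ} (R : Fin n → Request n) :
    opt R = (∑ p ∈ Finset.univ.filter (fun p : Fin n × Fin n => p.1 < p.2),
        mincross (R p.1) (R p.2)) ∧
    ∀ σ : Equiv.Perm (Fin n),
      (cr R ⇑σ = opt R ↔
        ∀ i j : Fin n, i < j →
          pairCross (R i) (R j) (σ i) (σ j) = mincross (R i) (R j)) := by
  set f : Fin n → ℕ := fun i => ((R i).fst : ℕ) + (R i).snd with hf
  set σ₀ : Equiv.Perm (Fin n) := (Tuple.sort f)⁻¹ with hσ₀
  -- the sorted permutation attains every pairwise minimum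
  have hmono : Monotone (f ∘ Tuple.sort f) := Tuple.monotone_sort f
  have hkey : ∀ i j : Fin n, σ₀ i < σ₀ j → f i ≤ f j := by
    intro i j hij
    by_contra hc
    push_neg at hc
    have h2 : σ₀ j < σ₀ i := by
      by_contra h3
      push_neg at h3
      have := hmono h3
      simp only [Function.comp_apply, hσ₀] at this hc
      rw [show ∀ x, (Tuple.sort f) ((Tuple.sort f)⁻¹ x) = x from fun x => (Tuple.sort f).apply_symm_apply x,
        show ∀ x, (Tuple.sort f) ((Tuple.sort f)⁻¹ x) = x from fun x => (Tuple.sort f).apply_symm_apply x] at this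
      omega
    exact absurd hij (asymm h2)
  have hopt₀ : ∀ i j : Fin n, i ≠ j →
      pairCross (R i) (R j) (σ₀ i) (σ₀ j) = mincross (R i) (R j) := by
    intro i j hij
    have hne : σ₀ i ≠ σ₀ j := fun h => hij (σ₀.injective h)
    rcases lt_or_gt_of_ne hne with h | h
    · rw [pairCross_of_lt _ _ h, mincross,
        min_eq_left (crossLower_le _ _ (hkey i j h))]
    · rw [pairCross_of_gt _ _ h, mincross,
        min_eq_right (crossLower_le _ _ (hkey j i h))]
  set S := ∑ p ∈ Finset.univ.filter (fun p : Fin n × Fin n => p.1 < p.2),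
      mincross (R p.1) (R p.2) with hS
  have hcr₀ : cr R ⇑σ₀ = S := by
    refine Finset.sum_congr rfl ?_
    intro p hp
    rw [Finset.mem_filter] at hp
    exact hopt₀ p.1 p.2 (ne_of_lt hp.2)
  have hlb : ∀ σ : Equiv.Perm (Fin n), S ≤ cr R ⇑σ := by
    intro σ
    refine Finset.sum_le_sum ?_
    intro p hp
    rw [Finset.mem_filter] at hp
    exact mincross_le_pairCross _ _ (fun h => (ne_of_lt hp.2) (σ.injective h))
  have hopt : opt R = S := by
    apply le_antisymm
    · exact Nat.sInf_le ⟨σ₀, hcr₀⟩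
    · refine le_csInf ⟨cr R ⇑σ₀, σ₀, rfl⟩ ?_
      rintro c ⟨σ, rfl⟩
      exact hlb σ
  refine ⟨hopt, fun σ => ⟨fun h i j hij => ?_, fun h => ?_⟩⟩
  · rw [hopt] at h
    have := (Finset.sum_eq_sum_iff_of_le (fun p hp => by
      rw [Finset.mem_filter] at hp
      exact mincross_le_pairCross _ _
        (fun h' => (ne_of_lt hp.2) (σ.injective h')))).mp h.symm
    exact (this (i, j) (by simp [hij])).symm
  · rw [hopt]
    refine Finset.sum_congr rfl ?_
    intro p hp
    rw [Finset.mem_filter] at hp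
    exact h p.1 p.2 hp.2
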